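/- There exists a positive integer t, independent of X, such that for every n×n positive semidefinite real matrix X the iterate g^t(X) (the t-fold composition of g applied to X) is positive definite. -/

import Mathlib

open Filter Matrix

noncomputable section

/-- The operator `g(X) = A X Aᵀ + Q − A X Cᵀ (C X Cᵀ + R)⁻¹ C X Aᵀ`. -/
def gOp {n m : ℕ} (A Q : Matrix (Fin n) (Fin n) ℝ) (C : Matrix (Fin m) (Fin n) ℝ)
    (R : Matrix (Fin m) (Fin m) ℝ) (X : Matrix (Fin n) (Fin n) ℝ) :
    Matrix (Fin n) (Fin n) ℝ :=
  A * X * Aᵀ + Q - A * X * Cᵀ * (C * X * Cᵀ + R)⁻¹ * (C * X * Aᵀ)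

/-- The stacked observability matrix `[C; CA; …; CA^(k−1)]`. -/
def obsMat {n m : ℕ} (C : Matrix (Fin m) (Fin n) ℝ) (A : Matrix (Fin n) (Fin n) ℝ) (k : ℕ) :
    Matrix (Fin k × Fin m) (Fin n) ℝ :=
  fun p j => (C * A ^ (p.1 : ℕ)) p.2 j

/-- The controllability matrix `[S, AS, …, A^(n−1) S]`. -/
def ctrbMat {n : ℕ} (A : Matrix (Fin n) (Fin n) ℝ) (S : Matrix (Fin n) (Fin n) ℝ) :
    Matrix (Fin n) (Fin n × Fin n) ℝ :=
  fun i p => (A ^ (p.1 : ℕ) * S) i p.2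

/-- The square root of a positive semidefinite matrix, as `Matrix.PosSemidef.sqrt` was defined
in the older Mathlib (removed since). -/
def Matrix.PosSemidef.sqrt {n : Type*} [Fintype n] [DecidableEq n]
    {A : Matrix n n ℝ} (hA : A.PosSemidef) : Matrix n n ℝ :=
  hA.1.eigenvectorUnitary.1 * diagonal ((↑) ∘ (√·) ∘ hA.1.eigenvalues) *
    (star hA.1.eigenvectorUnitary : Matrix n n ℝ)

private lemma sqrt_isHermitian_aux {a : ℕ} {M : Matrix (Fin a) (Fin a) ℝ} (h : M.PosSemidef) :
    h.sqrt.IsHermitian := by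
  unfold Matrix.PosSemidef.sqrt
  simp only [IsHermitian, conjTranspose_mul, Matrix.mul_assoc, diagonal_conjTranspose, star_star]
  simp [Matrix.star_eq_conjTranspose, Matrix.mul_assoc]

private lemma sqrt_mul_self_aux {a : ℕ} {M : Matrix (Fin a) (Fin a) ℝ} (h : M.PosSemidef) :
    h.sqrt * h.sqrt = M := by
  have hs := h.1.spectral_theorem
  rw [Unitary.conjStarAlgAut_apply] at hs
  unfold Matrix.PosSemidef.sqrt
  conv_rhs => rw [hs]
  have hU : (star h.1.eigenvectorUnitary : Matrix (Fin a) (Fin a) ℝ) * h.1.eigenvectorUnitary.1 = 1 :=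
    Unitary.coe_star_mul_self _
  simp only [Matrix.mul_assoc]
  rw [← Matrix.mul_assoc (star _ : Matrix (Fin a) (Fin a) ℝ), hU, Matrix.one_mul,
    ← Matrix.mul_assoc (diagonal _), diagonal_mul_diagonal]
  congr 3
  funext i
  simp [Real.mul_self_sqrt (h.eigenvalues_nonneg i)]

private lemma quadform_conj {a b : ℕ} (B : Matrix (Fin a) (Fin b) ℝ)
    (X : Matrix (Fin b) (Fin b) ℝ) (v : Fin a → ℝ) :
    v ⬝ᵥ (B * X * Bᵀ) *ᵥ v = (Bᵀ *ᵥ v) ⬝ᵥ X *ᵥ (Bᵀ *ᵥ v) := by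
  rw [mulVec_transpose, dotProduct_mulVec v, dotProduct_mulVec (v ᵥ* B),
    ← vecMul_vecMul, ← vecMul_vecMul, vecMul_transpose, dotProduct_comm,
    dotProduct_mulVec, dotProduct_comm]

private lemma transpose_eq_of_herm {a : ℕ} {M : Matrix (Fin a) (Fin a) ℝ}
    (h : M.IsHermitian) : Mᵀ = M := by
  rwa [← conjTranspose_eq_transpose_of_trivial]

private lemma gain_identity {n m : ℕ} (A X Q : Matrix (Fin n) (Fin n) ℝ)
    (C : Matrix (Fin m) (Fin n) ℝ) (R S : Matrix (Fin m) (Fin m) ℝ)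
    (K : Matrix (Fin n) (Fin m) ℝ)
    (hKS : K * S = A * X * Cᵀ) (hSdef : S = C * X * Cᵀ + R) :
    A * X * Aᵀ + Q - K * (C * X * Aᵀ) = (A - K * C) * X * (A - K * C)ᵀ + K * R * Kᵀ + Q := by
  have h1 : K * (C * X * Cᵀ) = A * X * Cᵀ - K * R := by
    rw [hSdef, Matrix.mul_add] at hKS
    rw [← hKS]; abel
  have h2 : K * (C * X * Cᵀ) * Kᵀ = A * X * Cᵀ * Kᵀ - K * R * Kᵀ := by
    rw [h1, Matrix.sub_mul]
  have expand : (A - K * C) * X * (A - K * C)ᵀ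
      = A * X * Aᵀ - A * X * (Cᵀ * Kᵀ) - K * (C * X * Aᵀ) + K * (C * X * Cᵀ) * Kᵀ := by
    rw [transpose_sub, transpose_mul]
    simp only [Matrix.sub_mul, Matrix.mul_sub, Matrix.mul_assoc]
    abel
  rw [expand, h2]
  simp only [Matrix.mul_assoc]
  abel

/-- Key structural lemma: `g` preserves positive semidefiniteness, and any null direction of
the quadratic form of `g(X)` is a null direction for `Q`, while `Aᵀ v` is a null direction
for `X`. -/
private lemma gOp_key {n m : ℕ} (A Q : Matrix (Fin n) (Fin n) ℝ)
    (C : Matrix (Fin m) (Fin n) ℝ) (R : Matrix (Fin m) (Fin m) ℝ)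
    (hQ : Q.PosSemidef) (hR : R.PosDef)
    (X : Matrix (Fin n) (Fin n) ℝ) (hX : X.PosSemidef) :
    (gOp A Q C R X).PosSemidef ∧
      ∀ v : Fin n → ℝ, v ⬝ᵥ (gOp A Q C R X) *ᵥ v = 0 →
        v ⬝ᵥ Q *ᵥ v = 0 ∧ (Aᵀ *ᵥ v) ⬝ᵥ X *ᵥ (Aᵀ *ᵥ v) = 0 := by
  have hCXC : (C * X * Cᵀ).PosSemidef := by
    have := hX.mul_mul_conjTranspose_same C
    rwa [conjTranspose_eq_transpose_of_trivial] at this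
  have hS : (C * X * Cᵀ + R).PosDef := Matrix.PosDef.posSemidef_add hCXC hR
  have hSu : IsUnit (C * X * Cᵀ + R).det := isUnit_iff_ne_zero.mpr hS.det_pos.ne'
  obtain ⟨K, hgid⟩ : ∃ K : Matrix (Fin n) (Fin m) ℝ,
      gOp A Q C R X = (A - K * C) * X * (A - K * C)ᵀ + K * R * Kᵀ + Q := by
    refine ⟨A * X * Cᵀ * (C * X * Cᵀ + R)⁻¹, ?_⟩
    have h := gain_identity A X Q C R (C * X * Cᵀ + R)
      (A * X * Cᵀ * (C * X * Cᵀ + R)⁻¹)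
      (Matrix.nonsing_inv_mul_cancel_right _ _ hSu) rfl
    simp only [gOp]
    exact h
  have hP1 : ((A - K * C) * X * (A - K * C)ᵀ).PosSemidef := by
    have := hX.mul_mul_conjTranspose_same (A - K * C)
    rwa [conjTranspose_eq_transpose_of_trivial] at this
  have hP2 : (K * R * Kᵀ).PosSemidef := by
    have := hR.posSemidef.mul_mul_conjTranspose_same K
    rwa [conjTranspose_eq_transpose_of_trivial] at this
  have hPsd : (gOp A Q C R X).PosSemidef := by
    rw [hgid]; exact (hP1.add hP2).add hQ
  refine ⟨hPsd, fun v hv => ?_⟩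
  have e1 : v ⬝ᵥ ((A - K * C) * X * (A - K * C)ᵀ) *ᵥ v
      + v ⬝ᵥ (K * R * Kᵀ) *ᵥ v + v ⬝ᵥ Q *ᵥ v = 0 := by
    rw [hgid] at hv
    simpa [add_mulVec, dotProduct_add] using hv
  have n1 : 0 ≤ v ⬝ᵥ ((A - K * C) * X * (A - K * C)ᵀ) *ᵥ v := by
    simpa [star_trivial] using hP1.dotProduct_mulVec_nonneg v
  have n2 : 0 ≤ v ⬝ᵥ (K * R * Kᵀ) *ᵥ v := by
    simpa [star_trivial] using hP2.dotProduct_mulVec_nonneg v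
  have n3 : 0 ≤ v ⬝ᵥ Q *ᵥ v := by
    simpa [star_trivial] using hQ.dotProduct_mulVec_nonneg v
  have z1 : v ⬝ᵥ ((A - K * C) * X * (A - K * C)ᵀ) *ᵥ v = 0 := by linarith
  have z2 : v ⬝ᵥ (K * R * Kᵀ) *ᵥ v = 0 := by linarith
  have z3 : v ⬝ᵥ Q *ᵥ v = 0 := by linarith
  have hKv : Kᵀ *ᵥ v = 0 := by
    by_contra hne
    have hpos := hR.dotProduct_mulVec_pos hne
    rw [star_trivial] at hpos
    rw [quadform_conj] at z2
    linarith
  have hAv : (A - K * C)ᵀ *ᵥ v = Aᵀ *ᵥ v := by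
    rw [transpose_sub, transpose_mul, sub_mulVec, ← mulVec_mulVec, hKv, mulVec_zero, sub_zero]
  rw [quadform_conj, hAv] at z1
  exact ⟨z3, z1⟩

private lemma iter_ker {n m : ℕ} (A Q : Matrix (Fin n) (Fin n) ℝ)
    (C : Matrix (Fin m) (Fin n) ℝ) (R : Matrix (Fin m) (Fin m) ℝ)
    (hQ : Q.PosSemidef) (hR : R.PosDef) :
    ∀ (k : ℕ) (X : Matrix (Fin n) (Fin n) ℝ), X.PosSemidef →
      ((gOp A Q C R)^[k] X).PosSemidef ∧
        ∀ v : Fin n → ℝ, v ⬝ᵥ ((gOp A Q C R)^[k] X) *ᵥ v = 0 →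
          ∀ j < k, ((A ^ j)ᵀ *ᵥ v) ⬝ᵥ Q *ᵥ ((A ^ j)ᵀ *ᵥ v) = 0 := by
  intro k
  induction k with
  | zero => exact fun X hX => ⟨hX, fun v _ j hj => absurd hj (Nat.not_lt_zero j)⟩
  | succ k ih =>
    intro X hX
    rw [Function.iterate_succ_apply']
    obtain ⟨hPk, hker⟩ := ih X hX
    obtain ⟨hPsd, hk⟩ := gOp_key A Q C R hQ hR _ hPk
    refine ⟨hPsd, fun v hv j hj => ?_⟩
    obtain ⟨hQv, hXv⟩ := hk v hv
    match j with
    | 0 => simpa using hQv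
    | (j + 1) =>
      have hprev := hker (Aᵀ *ᵥ v) hXv j (by omega)
      have harr : (A ^ j)ᵀ *ᵥ (Aᵀ *ᵥ v) = (A ^ (j + 1))ᵀ *ᵥ v := by
        rw [mulVec_mulVec, ← transpose_mul, ← pow_succ']
      rwa [harr] at hprev

/-- There is a positive integer `t`, independent of `X`, such that `g^t(X)` is positive
definite for every positive semidefinite `X`. -/
theorem gIter_posDef
    {n m : ℕ} (hn : 0 < n) (hm : 0 < m)
    (A : Matrix (Fin n) (Fin n) ℝ) (hA : IsUnit A.det)
    (C : Matrix (Fin m) (Fin n) ℝ) (hObs : (obsMat C A n).rank = n)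
    (Q : Matrix (Fin n) (Fin n) ℝ) (hQ : Q.PosSemidef)
    (hCtrb : (ctrbMat A hQ.sqrt).rank = n)
    (R : Matrix (Fin m) (Fin m) ℝ) (hR : R.PosDef) :
    ∃ t : ℕ, 0 < t ∧ ∀ X : Matrix (Fin n) (Fin n) ℝ, X.PosSemidef →
      ((gOp A Q C R)^[t] X).PosDef := by
  refine ⟨n, hn, fun X hX => ?_⟩
  obtain ⟨hPsd, hker⟩ := iter_ker A Q C R hQ hR n X hX
  refine posDef_iff_dotProduct_mulVec.mpr ⟨hPsd.1, fun v hv => ?_⟩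
  rw [star_trivial]
  rcases lt_or_eq_of_le (by simpa [star_trivial] using hPsd.dotProduct_mulVec_nonneg v) with h | h
  · exact h
  exfalso
  have hj : ∀ j < n, ((A ^ j)ᵀ *ᵥ v) ⬝ᵥ Q *ᵥ ((A ^ j)ᵀ *ᵥ v) = 0 := hker v h.symm
  have hsqrt : ∀ j < n, hQ.sqrt *ᵥ ((A ^ j)ᵀ *ᵥ v) = 0 := by
    intro j hjn
    have hq := hj j hjn
    set w := (A ^ j)ᵀ *ᵥ v with hw
    have hrw : w ⬝ᵥ Q *ᵥ w = (hQ.sqrt *ᵥ w) ⬝ᵥ (hQ.sqrt *ᵥ w) := by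
      conv_lhs => rw [← sqrt_mul_self_aux hQ]
      rw [← mulVec_mulVec, dotProduct_mulVec, ← mulVec_transpose,
        transpose_eq_of_herm (sqrt_isHermitian_aux hQ)]
    rw [hrw] at hq
    exact dotProduct_self_eq_zero.mp hq
  have hMv : (ctrbMat A hQ.sqrt)ᵀ *ᵥ v = 0 := by
    funext p
    obtain ⟨j, i⟩ := p
    have h1 : ((ctrbMat A hQ.sqrt)ᵀ *ᵥ v) (j, i) = ((A ^ (j : ℕ) * hQ.sqrt)ᵀ *ᵥ v) i := by
      simp [ctrbMat, mulVec, dotProduct, transpose_apply]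
    rw [h1, transpose_mul, transpose_eq_of_herm (sqrt_isHermitian_aux hQ), ← mulVec_mulVec,
      hsqrt (j : ℕ) j.2]
    rfl
  have hrank : ((ctrbMat A hQ.sqrt)ᵀ).rank = n := by
    rw [rank_transpose]; exact hCtrb
  unfold Matrix.rank at hrank
  set f := ((ctrbMat A hQ.sqrt)ᵀ).mulVecLin with hf
  have hsum := LinearMap.finrank_range_add_finrank_ker f
  rw [Module.finrank_fin_fun] at hsum
  have hkerf : Module.finrank ℝ (LinearMap.ker f) = 0 := by omega
  have hbot : LinearMap.ker f = ⊥ := Submodule.finrank_eq_zero.mp hkerf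
  have hvmem : v ∈ LinearMap.ker f := by
    rw [LinearMap.mem_ker, hf, mulVecLin_apply]
    exact hMv
  rw [hbot, Submodule.mem_bot] at hvmem
  exact hv hvmem
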